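/- For an integrable random variable W with continuous CDF and α ∈ (0,1), the maximum value of h(w') = w' + (1/α)E[min(W − w', 0)] over w' ∈ ℝ equals CVaR_α(W) := E[W | W ≤ q_α], where q_α is the α-quantile of W, provided P(W ≤ q_α) = α. -/

import Mathlib

open MeasureTheory

private lemma min_zero_eq (a : ℝ) : min a 0 = (a - |a|) / 2 := by
  rcases le_or_gt a 0 with h | h
  · rw [min_eq_left h, abs_of_nonpos h]; ring
  · rw [min_eq_right h.le, abs_of_pos h]; ring

private lemma integrable_min_zero {Ω : Type*} [MeasurableSpace Ω] {μ : Measure Ω}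
    {f : Ω → ℝ} (hf : Integrable f μ) :
    Integrable (fun ω => min (f ω) 0) μ := by
  have h : (fun ω => min (f ω) 0) = fun ω => (f ω - |f ω|) / 2 := by
    funext ω; exact min_zero_eq _
  rw [h]
  exact (hf.sub hf.abs).div_const 2

private lemma key_ineq (x w' q : ℝ) :
    min (x - w') 0 - min (x - q) 0 ≤ (if x < q then q - w' else 0) := by
  split_ifs with h
  · rw [min_eq_left (by linarith : x - q ≤ 0)]
    have := min_le_left (x - w') (0 : ℝ)
    linarith
  · rw [min_eq_right (by push_neg at h; linarith : (0:ℝ) ≤ x - q)]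
    have := min_le_right (x - w') (0 : ℝ)
    linarith

/-- The supremum of the Rockafellar–Uryasev auxiliary function equals the
conditional expectation `CVaR_α(W) = E[W · 1_{W ≤ q_α}]/α` at the α-quantile. -/
theorem ru_sup_eq_cvar
    {Ω : Type*} [MeasurableSpace Ω] (μ : Measure Ω) [IsProbabilityMeasure μ]
    (W : Ω → ℝ) (hW : Integrable W μ)
    (α : ℝ) (hα : α ∈ Set.Ioo (0 : ℝ) 1)
    (hcont : ∀ x : ℝ, μ {ω | W ω = x} = 0)
    (qα : ℝ) (hq : (μ {ω | W ω ≤ qα}).toReal = α) :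
    (⨆ w' : ℝ, (w' + (1 / α) * ∫ ω, min (W ω - w') 0 ∂μ))
      = (∫ ω, (if W ω ≤ qα then W ω else 0) ∂μ) / α := by
  obtain ⟨hα0, hα1⟩ := hα
  have hαne : α ≠ 0 := ne_of_gt hα0
  -- pass to a measurable representative
  have haem : AEMeasurable W μ := hW.aemeasurable
  set V : Ω → ℝ := haem.mk W with hVdef
  have hmV : Measurable V := haem.measurable_mk
  have hae : W =ᵐ[μ] V := haem.ae_eq_mk
  have hVint : Integrable V μ := hW.congr hae
  have hsetae : ∀ P : ℝ → Prop, {ω | P (W ω)} =ᵐ[μ] {ω | P (V ω)} := by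
    intro P
    filter_upwards [hae] with ω h
    show P (W ω) = P (V ω)
    rw [h]
  have hqV : (μ {ω | V ω ≤ qα}).toReal = α := by
    rw [← measure_congr (hsetae (fun x => x ≤ qα))]; exact hq
  have hcontV : μ {ω | V ω = qα} = 0 := by
    rw [← measure_congr (hsetae (fun x => x = qα))]; exact hcont qα
  have hint_min : ∀ w' : ℝ, (∫ ω, min (W ω - w') 0 ∂μ) = ∫ ω, min (V ω - w') 0 ∂μ := by
    intro w'
    apply integral_congr_ae
    filter_upwards [hae] with ω h
    rw [h]
  have hint_if : (∫ ω, (if W ω ≤ qα then W ω else 0) ∂μ)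
      = ∫ ω, (if V ω ≤ qα then V ω else 0) ∂μ := by
    apply integral_congr_ae
    filter_upwards [hae] with ω h
    rw [h]
  simp only [hint_min, hint_if]
  -- measurable sets
  have hsle : MeasurableSet {ω | V ω ≤ qα} := hmV measurableSet_Iic
  have hslt : MeasurableSet {ω | V ω < qα} := hmV measurableSet_Iio
  have hltα : (μ {ω | V ω < qα}).toReal = α := by
    have h1 : μ {ω | V ω < qα} = μ {ω | V ω ≤ qα} := by
      refine le_antisymm (measure_mono ?_) ?_
      · intro ω h
        simp only [Set.mem_setOf_eq] at h ⊢
        exact le_of_lt h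
      calc μ {ω | V ω ≤ qα} ≤ μ ({ω | V ω < qα} ∪ {ω | V ω = qα}) := by
            apply measure_mono
            intro ω h
            simp only [Set.mem_setOf_eq] at h
            rcases lt_or_eq_of_le h with h | h
            · exact Or.inl h
            · exact Or.inr h
        _ ≤ μ {ω | V ω < qα} + μ {ω | V ω = qα} := measure_union_le _ _
        _ = μ {ω | V ω < qα} := by rw [hcontV, add_zero]
    rw [h1, hqV]
  -- integrabilities
  have hminV : ∀ w' : ℝ, Integrable (fun ω => min (V ω - w') 0) μ :=
    fun w' => integrable_min_zero (hVint.sub (integrable_const w'))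
  have hifV : Integrable (fun ω => if V ω ≤ qα then V ω else 0) μ := by
    have h : (fun ω => if V ω ≤ qα then V ω else 0)
        = Set.indicator {ω | V ω ≤ qα} V := by
      funext ω; simp [Set.indicator_apply, Set.mem_setOf_eq]
    rw [h]; exact hVint.indicator hsle
  have hifq : Integrable (fun ω => if V ω ≤ qα then qα else 0) μ := by
    have h : (fun ω => if V ω ≤ qα then qα else 0)
        = Set.indicator {ω | V ω ≤ qα} (fun _ => qα) := by
      funext ω; simp [Set.indicator_apply, Set.mem_setOf_eq]
    rw [h]; exact (integrable_const qα).indicator hsle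
  set T : ℝ := ∫ ω, (if V ω ≤ qα then V ω else 0) ∂μ with hT
  have hintq : (∫ ω, (if V ω ≤ qα then qα else 0) ∂μ) = qα * α := by
    have h : (fun ω => if V ω ≤ qα then qα else 0)
        = Set.indicator {ω | V ω ≤ qα} (fun _ => qα) := by
      funext ω; simp [Set.indicator_apply, Set.mem_setOf_eq]
    rw [h, integral_indicator hsle, setIntegral_const, measureReal_def, hqV, smul_eq_mul, mul_comm]
  have hminq : (∫ ω, min (V ω - qα) 0 ∂μ) = T - qα * α := by
    have hpt : (fun ω => min (V ω - qα) 0)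
        = fun ω => (if V ω ≤ qα then V ω else 0) - (if V ω ≤ qα then qα else 0) := by
      funext ω
      split_ifs with h
      · rw [min_eq_left (by linarith)]
      · push_neg at h
        rw [min_eq_right (by linarith)]
        ring
    rw [hpt, integral_sub hifV hifq, hintq, hT]
  -- upper bound
  have hub : ∀ w' : ℝ, (∫ ω, min (V ω - w') 0 ∂μ)
      ≤ (∫ ω, min (V ω - qα) 0 ∂μ) + (qα - w') * α := by
    intro w'
    have hle : (∫ ω, (min (V ω - w') 0 - min (V ω - qα) 0) ∂μ)
        ≤ ∫ ω, Set.indicator {ω | V ω < qα} (fun _ => qα - w') ω ∂μ := by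
      apply integral_mono ((hminV w').sub (hminV qα)) ((integrable_const _).indicator hslt)
      intro ω
      have h := key_ineq (V ω) w' qα
      rw [Set.indicator_apply]
      simpa [Set.mem_setOf_eq] using h
    rw [integral_indicator hslt, setIntegral_const, measureReal_def, hltα, smul_eq_mul,
      integral_sub (hminV w') (hminV qα)] at hle
    nlinarith [hle]
  have hgb : ∀ w' : ℝ, w' + (1 / α) * ∫ ω, min (V ω - w') 0 ∂μ
      ≤ qα + (1 / α) * ∫ ω, min (V ω - qα) 0 ∂μ := by
    intro w'
    have h2 := hub w'
    have h3 : (1 / α) * (∫ ω, min (V ω - w') 0 ∂μ)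
        ≤ (1 / α) * ((∫ ω, min (V ω - qα) 0 ∂μ) + (qα - w') * α) :=
      mul_le_mul_of_nonneg_left h2 (by positivity)
    have h4 : (1 / α) * ((qα - w') * α) = qα - w' := by field_simp
    rw [mul_add, h4] at h3
    linarith
  have hsup : (⨆ w' : ℝ, (w' + (1 / α) * ∫ ω, min (V ω - w') 0 ∂μ))
      = qα + (1 / α) * ∫ ω, min (V ω - qα) 0 ∂μ := by
    apply le_antisymm (ciSup_le hgb)
    exact le_ciSup ⟨_, by rintro x ⟨w', rfl⟩; exact hgb w'⟩ qα
  rw [hsup, hminq]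
  field_simp
  ring
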